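/- Let κ < 0, let v_1, …, v_N ∈ 𝕃^{n, κ}, and let α_1, …, α_N ≥ 0 with Σ_{j=1}^N α_j > 0. Set s = Σ_{j=1}^N α_j v_j. Then the Lorentzian midpoint m = s / √(|κ| · |⟨s, s⟩_L|) lies in 𝕃^{n, κ}; that is, ⟨m, m⟩_L = 1/κ and the time-like component of m is strictly positive. -/

import Mathlib

/-- Real inverse hyperbolic cosine. -/
noncomputable def arcosh (x : ℝ) : ℝ := Real.log (x + Real.sqrt (x ^ 2 - 1))

/-- Lorentzian inner product on ℝ^{n+1}: ⟨x, y⟩_L = −x₀y₀ + Σ_{i=1}^n xᵢyᵢ. -/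
noncomputable def lorentzInner {n : ℕ} (x y : Fin (n + 1) → ℝ) : ℝ :=
  -(x 0 * y 0) + ∑ i : Fin n, x i.succ * y i.succ

/-- The Lorentz model 𝕃^{n,κ}: ⟨x, x⟩_L = 1/κ and positive time-like component. -/
def inLorentz {n : ℕ} (κ : ℝ) (x : Fin (n + 1) → ℝ) : Prop :=
  lorentzInner x x = 1 / κ ∧ 0 < x 0

/-- Lorentz distance d^κ(x,y) = (1/√|κ|)·arcosh(κ·⟨x,y⟩_L). -/
noncomputable def lorentzDist {n : ℕ} (κ : ℝ) (x y : Fin (n + 1) → ℝ) : ℝ :=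
  (1 / Real.sqrt |κ|) * arcosh (κ * lorentzInner x y)

lemma li_smul_left {n : ℕ} (c : ℝ) (x y : Fin (n + 1) → ℝ) :
    lorentzInner (c • x) y = c * lorentzInner x y := by
  simp [lorentzInner, Finset.mul_sum, mul_add, mul_assoc]

lemma li_add_left {n : ℕ} (x y z : Fin (n + 1) → ℝ) :
    lorentzInner (x + y) z = lorentzInner x z + lorentzInner y z := by
  simp [lorentzInner, add_mul, Finset.sum_add_distrib]
  ring

lemma li_zero_left {n : ℕ} (y : Fin (n + 1) → ℝ) : lorentzInner 0 y = 0 := by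
  simp [lorentzInner]

lemma li_symm {n : ℕ} (x y : Fin (n + 1) → ℝ) : lorentzInner x y = lorentzInner y x := by
  simp [lorentzInner, mul_comm]

lemma li_sum_left {n : ℕ} {ι : Type*} (t : Finset ι) (f : ι → (Fin (n + 1) → ℝ))
    (y : Fin (n + 1) → ℝ) :
    lorentzInner (∑ j ∈ t, f j) y = ∑ j ∈ t, lorentzInner (f j) y := by
  classical
  induction t using Finset.induction with
  | empty => simp [li_zero_left]
  | @insert a s h ih => rw [Finset.sum_insert h, li_add_left, ih, Finset.sum_insert h]

/-- Reverse Cauchy–Schwarz: two points of the model have inner product ≤ 1/κ. -/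
lemma li_cross {n : ℕ} {κ : ℝ} (hκ : κ < 0) {x y : Fin (n + 1) → ℝ}
    (hx : inLorentz κ x) (hy : inLorentz κ y) : lorentzInner x y ≤ 1 / κ := by
  obtain ⟨hx1, hx0⟩ := hx
  obtain ⟨hy1, hy0⟩ := hy
  have hκ' : 1 / κ < 0 := div_neg_of_pos_of_neg one_pos hκ
  obtain ⟨a, ha⟩ : ∃ a : ℝ, a = -(1/κ) := ⟨_, rfl⟩
  have ha0 : 0 < a := by rw [ha]; linarith
  obtain ⟨Sx, hSx⟩ : ∃ S : ℝ, S = ∑ i : Fin n, x i.succ ^ 2 := ⟨_, rfl⟩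
  obtain ⟨Sy, hSy⟩ : ∃ S : ℝ, S = ∑ i : Fin n, y i.succ ^ 2 := ⟨_, rfl⟩
  have hSxnn : 0 ≤ Sx := hSx ▸ Finset.sum_nonneg fun i _ => sq_nonneg _
  have hSynn : 0 ≤ Sy := hSy ▸ Finset.sum_nonneg fun i _ => sq_nonneg _
  have hx2 : x 0 * x 0 = Sx + a := by
    have h := hx1
    simp only [lorentzInner] at h
    have : ∑ i : Fin n, x i.succ * x i.succ = Sx := by
      rw [hSx]; exact Finset.sum_congr rfl fun i _ => (pow_two _).symm
    rw [this] at h; linarith [ha]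
  have hy2 : y 0 * y 0 = Sy + a := by
    have h := hy1
    simp only [lorentzInner] at h
    have : ∑ i : Fin n, y i.succ * y i.succ = Sy := by
      rw [hSy]; exact Finset.sum_congr rfl fun i _ => (pow_two _).symm
    rw [this] at h; linarith [ha]
  have hcs : (∑ i : Fin n, x i.succ * y i.succ) ^ 2 ≤ Sx * Sy := by
    rw [hSx, hSy]
    exact Finset.sum_mul_sq_le_sq_mul_sq Finset.univ _ _
  obtain ⟨p, hp⟩ : ∃ p : ℝ, p = Real.sqrt Sx := ⟨_, rfl⟩
  obtain ⟨q, hq⟩ : ∃ q : ℝ, q = Real.sqrt Sy := ⟨_, rfl⟩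
  have hp2 : p ^ 2 = Sx := by rw [hp]; exact Real.sq_sqrt hSxnn
  have hq2 : q ^ 2 = Sy := by rw [hq]; exact Real.sq_sqrt hSynn
  have hpnn : 0 ≤ p := hp ▸ Real.sqrt_nonneg _
  have hqnn : 0 ≤ q := hq ▸ Real.sqrt_nonneg _
  have hsp : ∑ i : Fin n, x i.succ * y i.succ ≤ p * q := by
    nlinarith [sq_nonneg (∑ i : Fin n, x i.succ * y i.succ - p * q),
      sq_nonneg (∑ i : Fin n, x i.succ * y i.succ + p * q), mul_nonneg hpnn hqnn]
  have hkey : p * q + a ≤ x 0 * y 0 := by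
    nlinarith [sq_nonneg (p - q), mul_pos hx0 hy0, mul_nonneg hpnn hqnn]
  have hfin : lorentzInner x y ≤ -(p * q + a) + p * q := by
    simp only [lorentzInner]
    linarith
  rw [ha] at hfin
  linarith

lemma li_smul_right {n : ℕ} (c : ℝ) (x y : Fin (n + 1) → ℝ) :
    lorentzInner x (c • y) = c * lorentzInner x y := by
  rw [li_symm, li_smul_left, li_symm]

lemma li_sum_right {n : ℕ} {ι : Type*} (t : Finset ι) (f : ι → (Fin (n + 1) → ℝ))
    (y : Fin (n + 1) → ℝ) :
    lorentzInner y (∑ j ∈ t, f j) = ∑ j ∈ t, lorentzInner y (f j) := by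
  rw [li_symm, li_sum_left]
  exact Finset.sum_congr rfl fun j _ => li_symm _ _

/-- The Lorentzian midpoint of a weighted sum lies in 𝕃^{n,κ}. -/
theorem lorentzian_midpoint_mem (n N : ℕ) (κ : ℝ) (hκ : κ < 0)
    (v : Fin N → (Fin (n + 1) → ℝ)) (hv : ∀ j, inLorentz κ (v j))
    (α : Fin N → ℝ) (hα : ∀ j, 0 ≤ α j) (hsum : 0 < ∑ j, α j)
    (s : Fin (n + 1) → ℝ) (hs : s = ∑ j, α j • v j) :
    inLorentz κ ((1 / Real.sqrt (|κ| * |lorentzInner s s|)) • s) := by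
  have hκ' : 1 / κ < 0 := div_neg_of_pos_of_neg one_pos hκ
  have expand : lorentzInner s s = ∑ i, ∑ j, α i * (α j * lorentzInner (v i) (v j)) := by
    rw [hs, li_sum_left]
    refine Finset.sum_congr rfl fun i _ => ?_
    rw [li_smul_left, li_sum_right, Finset.mul_sum]
    exact Finset.sum_congr rfl fun j _ => by rw [li_smul_right]
  have hbound : lorentzInner s s ≤ (∑ j, α j) * (∑ j, α j) * (1 / κ) := by
    rw [expand]
    calc ∑ i, ∑ j, α i * (α j * lorentzInner (v i) (v j))
        ≤ ∑ i, ∑ j, α i * (α j * (1 / κ)) :=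
          Finset.sum_le_sum fun i _ => Finset.sum_le_sum fun j _ =>
            mul_le_mul_of_nonneg_left
              (mul_le_mul_of_nonneg_left (li_cross hκ (hv i) (hv j)) (hα j)) (hα i)
      _ = (∑ j, α j) * (∑ j, α j) * (1 / κ) := by
          simp_rw [← Finset.mul_sum, ← Finset.sum_mul]
          ring
  have hL : lorentzInner s s < 0 :=
    lt_of_le_of_lt hbound (mul_neg_of_pos_of_neg (mul_pos hsum hsum) hκ')
  have hs0 : 0 < s 0 := by
    obtain ⟨j, hj⟩ : ∃ j, 0 < α j := by
      by_contra hcon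
      push_neg at hcon
      have : ∑ j, α j ≤ 0 := Finset.sum_nonpos fun j _ => hcon j
      linarith
    have happ : s 0 = ∑ j, α j * v j 0 := by
      rw [hs]
      simp [Finset.sum_apply]
    rw [happ]
    exact Finset.sum_pos' (fun i _ => mul_nonneg (hα i) (le_of_lt (hv i).2))
      ⟨j, Finset.mem_univ j, mul_pos hj (hv j).2⟩
  have hP : |κ| * |lorentzInner s s| = κ * lorentzInner s s := by
    rw [abs_of_neg hκ, abs_of_neg hL]; ring
  have hPpos : 0 < |κ| * |lorentzInner s s| := by
    rw [hP]; exact mul_pos_of_neg_of_neg hκ hL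
  have hsq : (1 / Real.sqrt (|κ| * |lorentzInner s s|)) ^ 2
      = 1 / (κ * lorentzInner s s) := by
    rw [div_pow, one_pow, Real.sq_sqrt hPpos.le, hP]
  have hcpos : 0 < 1 / Real.sqrt (|κ| * |lorentzInner s s|) :=
    div_pos one_pos (Real.sqrt_pos.mpr hPpos)
  constructor
  · rw [li_smul_left, li_smul_right]
    have heq : (1 / Real.sqrt (|κ| * |lorentzInner s s|)) *
        ((1 / Real.sqrt (|κ| * |lorentzInner s s|)) * lorentzInner s s)
        = (1 / Real.sqrt (|κ| * |lorentzInner s s|)) ^ 2 * lorentzInner s s := by ring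
    rw [heq, hsq]
    have hκ0 : κ ≠ 0 := ne_of_lt hκ
    have hL0 : lorentzInner s s ≠ 0 := ne_of_lt hL
    field_simp
  · exact mul_pos hcpos hs0
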